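/- Suppose φ : [0,1] → [0,1] is upward continuous, and ε* ∈ [0,1] satisfies φ(ε') ≥ φ(ε*) for all ε' > ε*. Then ŵ⁻¹(ε*) = φ(ε*), where ŵ⁻¹ is the generalized inverse of ŵ(v) = sup{ε : φ(ε) ≤ v}. -/
import Mathlib


open Set

/-- Claim 4 of Lemma 2: if `φ : [0,1] → [0,1]` is upward continuous with `φ ε ≥ ε`, and
`ε*` is a point such that `φ ε' ≥ φ ε*` for all `ε' > ε*`, then the monotone envelope
`ŵ⁻¹` agrees with `φ` at `ε*`: `ŵ⁻¹(ε*) = φ(ε*)`. -/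
theorem stmt18 (φ what whatinv : ℝ → ℝ)
    (hmap : ∀ ε ∈ Set.Icc (0:ℝ) 1, φ ε ∈ Set.Icc (0:ℝ) 1)
    (hge : ∀ ε ∈ Set.Icc (0:ℝ) 1, ε ≤ φ ε)
    (hup : ∀ x ∈ Set.Icc (0:ℝ) 1,
      ¬ (∃ δ > 0, ∀ η > 0, ∃ x' ∈ Set.Ioo (x - η) x ∩ Set.Icc (0:ℝ) 1,
            φ x' + δ < φ x) ∧
      ¬ (∃ δ > 0, ∀ η > 0, ∃ x' ∈ Set.Ioo x (x + η) ∩ Set.Icc (0:ℝ) 1,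
            φ x + δ < φ x'))
    (hwhat : ∀ v, what v = sSup {ε : ℝ | ε ∈ Set.Icc (0:ℝ) 1 ∧ φ ε ≤ v})
    (hwhatinv : ∀ ε, whatinv ε = sSup {v : ℝ | v ∈ Set.Icc (0:ℝ) 1 ∧ what v ≤ ε})
    (εstar : ℝ) (hεstar : εstar ∈ Set.Icc (0:ℝ) 1)
    (hmin : ∀ ε' ∈ Set.Icc (0:ℝ) 1, εstar < ε' → φ εstar ≤ φ ε') :
    whatinv εstar = φ εstar := by
  obtain ⟨hε0, hε1⟩ := hεstar
  have hφs := hmap εstar ⟨hε0, hε1⟩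
  obtain ⟨hφ0, hφ1⟩ := hφs
  -- Claim 1: if v < φ ε*, then what v ≤ ε*
  have claim1 : ∀ v : ℝ, v < φ εstar → what v ≤ εstar := by
    intro v hv
    rw [hwhat]
    apply Real.sSup_le _ hε0
    rintro ε ⟨hεm, hφε⟩
    by_contra h
    push_neg at h
    exact absurd (hmin ε hεm h) (by linarith)
  -- what 0 ≤ ε*
  have hw0 : what 0 ≤ εstar := by
    rw [hwhat]
    apply Real.sSup_le _ hε0
    rintro ε ⟨hεm, hφε⟩
    have := hge ε hεm
    linarith
  -- Claim 2: if v ∈ [0,1] and what v ≤ ε*, then v ≤ φ ε*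
  have claim2 : ∀ v ∈ Set.Icc (0:ℝ) 1, what v ≤ εstar → v ≤ φ εstar := by
    rintro v ⟨hv0, hv1⟩ hwv
    rcases eq_or_lt_of_le hε1 with h1 | h1
    · -- ε* = 1, so φ ε* = 1
      have : φ εstar = 1 := le_antisymm hφ1 (h1 ▸ hge εstar ⟨hε0, hε1⟩)
      linarith
    by_contra hcon
    push_neg at hcon
    have hnr := (hup εstar ⟨hε0, hε1⟩).2
    push_neg at hnr
    obtain ⟨η, hη, hall⟩ := hnr (v - φ εstar) (by linarith)
    set x' : ℝ := min (εstar + η / 2) ((εstar + 1) / 2) with hx'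
    have hx'gt : εstar < x' := lt_min (by linarith) (by linarith)
    have hx'mem : x' ∈ Set.Ioo εstar (εstar + η) ∩ Set.Icc (0:ℝ) 1 := by
      constructor
      · exact ⟨hx'gt, lt_of_le_of_lt (min_le_left _ _) (by linarith)⟩
      · exact ⟨le_of_lt (lt_of_le_of_lt hε0 hx'gt),
          le_trans (min_le_right _ _) (by linarith)⟩
    have hφx' : φ x' ≤ v := by
      have := hall x' hx'mem
      linarith
    have hwv' : x' ≤ what v := by
      rw [hwhat]
      apply le_csSup
      · exact ⟨1, by rintro ε ⟨⟨_, hε1'⟩, _⟩; exact hε1'⟩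
      · exact ⟨hx'mem.2, hφx'⟩
    linarith
  -- Now compute whatinv ε*
  rw [hwhatinv]
  apply le_antisymm
  · exact Real.sSup_le (fun v hv => claim2 v hv.1 hv.2) hφ0
  · rcases eq_or_lt_of_le hφ0 with h0 | h0
    · -- φ ε* = 0
      rw [← h0]
      apply le_csSup
      · exact ⟨1, by rintro v ⟨⟨_, hv1⟩, _⟩; exact hv1⟩
      · exact ⟨⟨le_refl 0, by norm_num⟩, hw0⟩
    · -- φ ε* > 0
      have : Set.Ico (0:ℝ) (φ εstar) ⊆
          {v : ℝ | v ∈ Set.Icc (0:ℝ) 1 ∧ what v ≤ εstar} := by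
        rintro v ⟨hv0, hv1⟩
        exact ⟨⟨hv0, le_of_lt (lt_of_lt_of_le hv1 hφ1)⟩, claim1 v hv1⟩
      calc φ εstar = sSup (Set.Ico (0:ℝ) (φ εstar)) := (csSup_Ico h0).symm
        _ ≤ _ := csSup_le_csSup ⟨1, by rintro v ⟨⟨_, hv1⟩, _⟩; exact hv1⟩
            ⟨0, le_refl 0, h0⟩ this
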